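/- Green function of the d-regular tree: Let d ≥ 2 be an integer, p > 1, and let 𝕋_d be the d-regular tree with standard weights and m ≡ 1, rooted at o. Then ∂_bB_k(o) = d^{k+1} for all k ≥ 0, the p-Laplacian Δ_p on 𝕋_d is subcritical, and its minimal positive Green function with pole o is G₀(x) = d^{-(|x|+1)/(p-1)} / (1 − d^{-1/(p-1)}), i.e., G₀(x) = C_{p,d}·d^{-|x|/(p-1)} with C_{p,d} = d^{-1/(p-1)}/(1 − d^{-1/(p-1)}). -/

import Mathlib

open Real Filter

noncomputable section

attribute [local instance] Classical.propDecidable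

/-- Signed power `a^⟨r⟩ = |a|^(r-1)·a`, with `0^⟨r⟩ = 0`. -/
def spow (r a : ℝ) : ℝ := if a = 0 then 0 else |a| ^ (r - 1) * a

/-- `b` is a (weighted, row-summable) graph over `X`. -/
def IsGraph {X : Type*} (b : X → X → ℝ) : Prop :=
  (∀ x y, 0 ≤ b x y) ∧ (∀ x y, b x y = b y x) ∧ (∀ x, b x x = 0) ∧
    ∀ x, Summable fun y => b x y

/-- Connectedness: any two vertices are joined by a path of positive-weight edges. -/
def GraphConnected {X : Type*} (b : X → X → ℝ) : Prop :=
  ∀ x y, Relation.ReflTransGen (fun u v => 0 < b u v) x y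

/-- Membership in `F_b(X)`. -/
def inF {X : Type*} (p : ℝ) (b : X → X → ℝ) (f : X → ℝ) : Prop :=
  ∀ x, Summable fun y => b x y * |f x - f y| ^ (p - 1)

/-- The weighted `p`-Laplacian. -/
def pLap {X : Type*} (p : ℝ) (b : X → X → ℝ) (m : X → ℝ) (f : X → ℝ) (x : X) : ℝ :=
  (1 / m x) * ∑' y, b x y * spow (p - 1) (f x - f y)

/-- The quasilinear Schrödinger operator `H = Δ_p + V`. -/
def schrodOp {X : Type*} (p : ℝ) (b : X → X → ℝ) (m V : X → ℝ) (f : X → ℝ) (x : X) : ℝ :=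
  pLap p b m f x + V x * spow (p - 1) (f x)

/-- The energy functional `Q_{p,b,m,V}`. -/
def pEnergy {X : Type*} (p : ℝ) (b : X → X → ℝ) (m V : X → ℝ) (φ : X → ℝ) : ℝ :=
  (1 / 2) * (∑' z : X × X, b z.1 z.2 * |φ z.1 - φ z.2| ^ p)
    + ∑' x, m x * V x * |φ x| ^ p

/-- Positivity of `H`: existence of a positive `H`-superharmonic function. -/
def IsPositiveOp {X : Type*} (p : ℝ) (b : X → X → ℝ) (m V : X → ℝ) : Prop :=
  ∃ w : X → ℝ, inF p b w ∧ (∀ x, 0 ≤ w x) ∧ w ≠ 0 ∧ ∀ x, 0 ≤ schrodOp p b m V w x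

/-- Subcriticality of the energy functional. -/
def pSubcritical {X : Type*} (p : ℝ) (b : X → X → ℝ) (m V : X → ℝ) : Prop :=
  ∃ W : X → ℝ, (∀ x, 0 ≤ W x) ∧ W ≠ 0 ∧
    ∀ φ : X → ℝ, (Function.support φ).Finite →
      0 ≤ pEnergy p b m (fun x => V x - W x) φ

/-- Criticality: the energy functional is nonnegative but not subcritical. -/
def pCritical {X : Type*} (p : ℝ) (b : X → X → ℝ) (m V : X → ℝ) : Prop :=
  (∀ φ : X → ℝ, (Function.support φ).Finite → 0 ≤ pEnergy p b m V φ) ∧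
    ¬ pSubcritical p b m V

/-- `v` is an Agmon ground state: strictly positive, harmonic, and every positive
superharmonic function is a positive multiple of it. -/
def IsAgmonGroundState {X : Type*} (p : ℝ) (b : X → X → ℝ) (m V : X → ℝ)
    (v : X → ℝ) : Prop :=
  (∀ x, 0 < v x) ∧ inF p b v ∧ (∀ x, schrodOp p b m V v x = 0) ∧
    ∀ w : X → ℝ, inF p b w → (∀ x, 0 ≤ w x) → w ≠ 0 →
      (∀ x, 0 ≤ schrodOp p b m V w x) → ∃ c : ℝ, 0 < c ∧ ∀ x, w x = c * v x

/-- `G` is the minimal positive Green function of `Δ_p + α` with pole `o`. -/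
def IsGreenFunction {X : Type*} (p : ℝ) (b : X → X → ℝ) (m : X → ℝ) (α : ℝ)
    (o : X) (G : X → ℝ) : Prop :=
  (∀ x, 0 < G x) ∧ inF p b G ∧
    (∀ x, schrodOp p b m (fun _ => α) G x = if x = o then 1 else 0) ∧
    ∀ φ : X → ℝ, inF p b φ → (∀ x, 0 < φ x) →
      (∀ x, schrodOp p b m (fun _ => α) φ x = if x = o then 1 else 0) →
      ∀ x, G x ≤ φ x

/-- `u` is a positive solution of `H[u] = 0` of minimal growth at infinity. -/
def PositiveMinimalGrowth {X : Type*} (p : ℝ) (b : X → X → ℝ) (m V : X → ℝ)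
    (u : X → ℝ) : Prop :=
  (∀ x, 0 < u x) ∧ inF p b u ∧
    ∃ K₀ : Set X, K₀.Finite ∧ (∀ x ∉ K₀, schrodOp p b m V u x = 0) ∧
      ∀ K : Set X, K.Finite → K₀ ⊆ K →
        ∀ v : X → ℝ, inF p b v → (∀ x, 0 < v x) →
          (∀ x ∉ K, 0 ≤ schrodOp p b m V v x) → (∀ x ∈ K, u x ≤ v x) →
          ∀ x ∉ K, u x ≤ v x

/-- Combinatorial graph distance from `o` to `x`. -/
def gdist {X : Type*} (b : X → X → ℝ) (o x : X) : ℕ :=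
  sInf {n : ℕ | ∃ w : ℕ → X, w 0 = o ∧ w n = x ∧ ∀ i < n, 0 < b (w i) (w (i + 1))}

/-- Total edge weight `∂_b B_k(o)` between the spheres of radii `k` and `k+1`. -/
def sphereBoundary {X : Type*} (b : X → X → ℝ) (o : X) (k : ℕ) : ℝ :=
  ∑' z : X × X, if gdist b o z.1 = k ∧ gdist b o z.2 = k + 1 then b z.1 z.2 else 0

/-- Model graph: the inner and outer curvatures are spherically symmetric. -/
def IsModelGraph {X : Type*} (b : X → X → ℝ) (m : X → ℝ) (o : X) : Prop :=
  ∀ x y, gdist b o x = gdist b o y →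
    ((1 / m x) * (∑' z, if gdist b o z = gdist b o x + 1 then b x z else 0)
        = (1 / m y) * (∑' z, if gdist b o z = gdist b o y + 1 then b y z else 0)) ∧
    ((1 / m x) * (∑' z, if gdist b o z + 1 = gdist b o x then b x z else 0)
        = (1 / m y) * (∑' z, if gdist b o z + 1 = gdist b o y then b y z else 0))

/-- The Green function of a subcritical model graph:
`G₀(x) = ∑_{k=|x|}^∞ (m(o)/∂_bB_k(o))^{1/(p-1)}`. -/
def modelGreen {X : Type*} (p : ℝ) (b : X → X → ℝ) (m : X → ℝ) (o : X) (x : X) : ℝ :=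
  ∑' k : ℕ, (m o / sphereBoundary b o (gdist b o x + k)) ^ (1 / (p - 1))

/-- The `d`-regular tree with standard weights, root `o` and distance function `ℓ`. -/
def IsRegularTree {X : Type*} (d : ℕ) (b : X → X → ℝ) (o : X) (ℓ : X → ℕ) : Prop :=
  (∀ x y, b x y = b y x) ∧ (∀ x, b x x = 0) ∧ (∀ x y, b x y = 0 ∨ b x y = 1) ∧
    ℓ o = 0 ∧
    (∀ x, {y | b x y = 1 ∧ ℓ y = ℓ x + 1}.ncard = d) ∧
    (∀ x, x ≠ o → {y | b x y = 1 ∧ ℓ y + 1 = ℓ x}.ncard = 1) ∧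
    (∀ x y, b x y = 1 → ℓ y = ℓ x + 1 ∨ ℓ x = ℓ y + 1)

/-- The simplified energy functional `E_u(φ)`. -/
def simpEnergy {X : Type*} (p : ℝ) (b : X → X → ℝ) (u φ : X → ℝ) : ℝ :=
  ∑' z : X × X,
    b z.1 z.2 * (u z.1 * u z.2) * |φ z.1 - φ z.2| ^ 2 *
      (|u z.1 - u z.2| * ((|φ z.1| + |φ z.2|) / 2)
        + (u z.1 * u z.2) ^ ((1 : ℝ) / 2) * |φ z.1 - φ z.2|) ^ (p - 2)

namespace RTG


/-! ### spow lemmas -/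

lemma spow_of_pos {r a : ℝ} (ha : 0 < a) : spow r a = a ^ r := by
  rw [spow, if_neg (ne_of_gt ha), abs_of_pos ha]
  nth_rewrite 2 [← Real.rpow_one a]
  rw [← Real.rpow_add ha]; ring_nf

lemma spow_neg (r a : ℝ) : spow r (-a) = - spow r a := by
  rcases eq_or_ne a 0 with h | h
  · simp [spow, h]
  · rw [spow, spow, if_neg (neg_ne_zero.mpr h), if_neg h, abs_neg]; ring

lemma spow_nonpos {r a : ℝ} (ha : a ≤ 0) : spow r a ≤ 0 := by
  rcases eq_or_lt_of_le ha with h | h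
  · simp [spow, ← h]
  · rw [spow, if_neg (ne_of_lt h)]
    have : (0:ℝ) ≤ |a| ^ (r-1) := Real.rpow_nonneg (abs_nonneg a) _
    nlinarith

lemma spow_pos_of_pos {r a : ℝ} (ha : 0 < a) : 0 < spow r a := by
  rw [spow_of_pos ha]; exact Real.rpow_pos_of_pos ha r

/-- If `0 < m ≤ spow (p-1) t` then `t > 0` and `m^(1/(p-1)) ≤ t`. -/
lemma le_of_spow_le {p m t : ℝ} (hp : 1 < p) (hm : 0 < m) (h : m ≤ spow (p-1) t) :
    0 < t ∧ m ^ (1/(p-1)) ≤ t := by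
  have hp1 : (0:ℝ) < p - 1 := by linarith
  have ht : 0 < t := by
    by_contra hc
    push_neg at hc
    exact absurd (lt_of_lt_of_le hm h) (not_lt.mpr (spow_nonpos hc))
  refine ⟨ht, ?_⟩
  rw [spow_of_pos ht] at h
  calc m ^ (1/(p-1)) ≤ (t ^ (p-1)) ^ (1/(p-1)) :=
        Real.rpow_le_rpow hm.le h (by positivity)
    _ = t := by
        rw [← Real.rpow_mul ht.le, mul_one_div, div_self (ne_of_gt hp1), Real.rpow_one]
  

variable {X : Type}

/-- Packaged context for a `d`-regular tree. -/
structure Ctx (X : Type) where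
  d : ℕ
  b : X → X → ℝ
  o : X
  ℓ : X → ℕ
  hd : 2 ≤ d
  ht : IsRegularTree d b o ℓ

namespace Ctx

variable (c : Ctx X)

lemma symm (x y : X) : c.b x y = c.b y x := c.ht.1 x y
lemma b01 (x y : X) : c.b x y = 0 ∨ c.b x y = 1 := c.ht.2.2.1 x y
lemma lo : c.ℓ c.o = 0 := c.ht.2.2.2.1
lemma child_ncard (x : X) : {y | c.b x y = 1 ∧ c.ℓ y = c.ℓ x + 1}.ncard = c.d :=
  c.ht.2.2.2.2.1 x
lemma par_ncard {x : X} (hx : x ≠ c.o) :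
    {y | c.b x y = 1 ∧ c.ℓ y + 1 = c.ℓ x}.ncard = 1 := c.ht.2.2.2.2.2.1 x hx
lemma level_step {x y : X} (h : c.b x y = 1) :
    c.ℓ y = c.ℓ x + 1 ∨ c.ℓ x = c.ℓ y + 1 := c.ht.2.2.2.2.2.2 x y h

lemma b_nonneg (x y : X) : 0 ≤ c.b x y := by
  rcases c.b01 x y with h | h <;> simp [h]

lemma child_finite (x : X) : {y | c.b x y = 1 ∧ c.ℓ y = c.ℓ x + 1}.Finite := by
  by_contra h
  have h0 : {y | c.b x y = 1 ∧ c.ℓ y = c.ℓ x + 1}.Infinite := h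
  have := h0.ncard
  have h2 := c.child_ncard x
  have h3 := c.hd
  omega

/-- The finset of children of `x`. -/
def C (x : X) : Finset X := (c.child_finite x).toFinset

lemma mem_C {x y : X} : y ∈ c.C x ↔ c.b x y = 1 ∧ c.ℓ y = c.ℓ x + 1 := by
  simp [C, Set.Finite.mem_toFinset]

lemma card_C (x : X) : (c.C x).card = c.d := by
  rw [C, ← Set.ncard_eq_toFinset_card _ (c.child_finite x)]
  exact c.child_ncard x

/-- The parent of `x` (junk value at `o`). -/
def par (x : X) : X :=
  if h : ∃ y, c.b x y = 1 ∧ c.ℓ y + 1 = c.ℓ x then h.choose else x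

lemma par_spec {x : X} (hx : x ≠ c.o) :
    c.b x (c.par x) = 1 ∧ c.ℓ (c.par x) + 1 = c.ℓ x := by
  obtain ⟨a, ha⟩ := Set.ncard_eq_one.mp (c.par_ncard hx)
  have hex : ∃ y, c.b x y = 1 ∧ c.ℓ y + 1 = c.ℓ x := ⟨a, by
    have : a ∈ {y | c.b x y = 1 ∧ c.ℓ y + 1 = c.ℓ x} := ha ▸ rfl
    exact this⟩
  rw [par, dif_pos hex]
  exact hex.choose_spec

lemma par_unique {x y : X} (hx : x ≠ c.o) (h1 : c.b x y = 1) (h2 : c.ℓ y + 1 = c.ℓ x) :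
    y = c.par x := by
  obtain ⟨a, ha⟩ := Set.ncard_eq_one.mp (c.par_ncard hx)
  have hy : y ∈ {y | c.b x y = 1 ∧ c.ℓ y + 1 = c.ℓ x} := ⟨h1, h2⟩
  have hp : c.par x ∈ {y | c.b x y = 1 ∧ c.ℓ y + 1 = c.ℓ x} := c.par_spec hx
  rw [ha] at hy hp
  rw [Set.mem_singleton_iff] at hy hp
  rw [hy, hp]

lemma eq_o_of_level {x : X} (h : c.ℓ x = 0) : x = c.o := by
  by_contra hx
  have h1 := c.par_ncard hx
  have : {y | c.b x y = 1 ∧ c.ℓ y + 1 = c.ℓ x} = ∅ := by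
    ext y; simp [h]
  rw [this] at h1
  simp at h1

lemma ne_o_of_mem_C {x y : X} (h : y ∈ c.C x) : y ≠ c.o := by
  intro hy
  have := (c.mem_C.mp h).2
  rw [hy, c.lo] at this
  omega

lemma par_of_mem_C {x y : X} (h : y ∈ c.C x) : c.par y = x := by
  obtain ⟨hb, hl⟩ := c.mem_C.mp h
  exact (c.par_unique (c.ne_o_of_mem_C h) (by rw [← c.symm]; exact hb) hl.symm).symm

lemma mem_C_par {x : X} (hx : x ≠ c.o) : x ∈ c.C (c.par x) := by
  obtain ⟨hb, hl⟩ := c.par_spec hx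
  exact c.mem_C.mpr ⟨by rw [c.symm]; exact hb, hl.symm⟩

lemma C_disjoint {u v : X} (huv : u ≠ v) : Disjoint (c.C u) (c.C v) := by
  rw [Finset.disjoint_left]
  intro x hxu hxv
  exact huv ((c.par_of_mem_C hxu).symm.trans (c.par_of_mem_C hxv))

lemma par_o : c.par c.o = c.o := by
  rw [par, dif_neg]
  rintro ⟨y, -, hy⟩
  rw [c.lo] at hy
  omega

lemma par_not_mem_C {x : X} : c.par x ∉ c.C x := by
  intro h
  have h2 := (c.mem_C.mp h).2
  by_cases hx : x = c.o
  · rw [hx, c.par_o] at h2; omega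
  · have := (c.par_spec hx).2
    omega

end Ctx

namespace Ctx

variable (c : Ctx X)

/-- Neighborhood finset (includes `x` itself and junk parent; harmless). -/
def NFin (x : X) : Finset X := c.C x ∪ {c.par x} ∪ {x}

lemma mem_NFin_of_b {x y : X} (h : c.b x y = 1) : y ∈ c.NFin x := by
  rcases c.level_step h with hl | hl
  · exact Finset.mem_union_left _ (Finset.mem_union_left _ (c.mem_C.mpr ⟨h, hl⟩))
  · have hx : x ≠ c.o := by
      intro hxo; rw [hxo, c.lo] at hl; omega
    have : y = c.par x := c.par_unique hx h hl.symm
    exact Finset.mem_union_left _ (Finset.mem_union_right _ (by simp [this]))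

lemma b_eq_zero_of_not_mem {x y : X} (h : y ∉ c.NFin x) : c.b x y = 0 := by
  rcases c.b01 x y with h0 | h1
  · exact h0
  · exact absurd (c.mem_NFin_of_b h1) h

/-- The key neighbor-sum formula for `tsum`s against `b x ·`. -/
lemma tsum_nbr (x : X) (g : X → ℝ) :
    ∑' y, c.b x y * g y
      = (∑ v ∈ c.C x, g v) + (if x = c.o then 0 else g (c.par x)) := by
  have hvanish : ∀ y ∉ c.NFin x, c.b x y * g y = 0 := fun y hy => by
    rw [c.b_eq_zero_of_not_mem hy, zero_mul]
  rw [tsum_eq_sum hvanish]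
  by_cases hx : x = c.o
  · rw [if_pos hx, add_zero]
    have hN : c.NFin x = c.C x ∪ {x} := by
      rw [NFin, hx, c.par_o, ← hx]
      ext y; simp
    rw [hN, Finset.sum_union]
    · have hxC : c.b x x = 0 := c.ht.2.1 x
      have : ∀ v ∈ c.C x, c.b x v * g v = g v := fun v hv => by
        rw [(c.mem_C.mp hv).1, one_mul]
      rw [Finset.sum_congr rfl this]
      simp [c.ht.2.1 x]
    · rw [Finset.disjoint_singleton_right]
      intro hxx
      have := (c.mem_C.mp hxx).2
      omega
  · rw [if_neg hx]
    have hpar := c.par_spec hx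
    have hparx : c.par x ≠ x := by
      intro h; have := hpar.2; rw [h] at this; omega
    have hN : c.NFin x = (c.C x ∪ {c.par x}) ∪ {x} := rfl
    rw [hN, Finset.sum_union, Finset.sum_union]
    · have : ∀ v ∈ c.C x, c.b x v * g v = g v := fun v hv => by
        rw [(c.mem_C.mp hv).1, one_mul]
      rw [Finset.sum_congr rfl this]
      simp [c.ht.2.1 x, hpar.1]
    · rw [Finset.disjoint_singleton_right]
      exact c.par_not_mem_C
    · rw [Finset.disjoint_singleton_right, Finset.mem_union, Finset.mem_singleton]
      push_neg
      constructor
      · intro hxx; have := (c.mem_C.mp hxx).2; omega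
      · exact fun h => hparx h.symm

/-- Summability of anything supported on neighbors. -/
lemma summable_nbr (x : X) (g : X → ℝ) : Summable (fun y => c.b x y * g y) :=
  summable_of_ne_finset_zero (s := c.NFin x) fun y hy => by
    rw [c.b_eq_zero_of_not_mem hy, zero_mul]

/-- The sphere of radius `k` as a finset. -/
def sphere (t : Ctx X) : ℕ → Finset X
  | 0 => {t.o}
  | k + 1 => (sphere t k).biUnion t.C

lemma mem_sphere {k : ℕ} {x : X} : x ∈ c.sphere k ↔ c.ℓ x = k := by
  induction k generalizing x with
  | zero =>
    simp only [sphere, Finset.mem_singleton]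
    constructor
    · rintro rfl; exact c.lo
    · exact fun h => c.eq_o_of_level h
  | succ k ih =>
    simp only [sphere, Finset.mem_biUnion]
    constructor
    · rintro ⟨u, hu, hx⟩
      rw [(c.mem_C.mp hx).2, ih.mp hu]
    · intro hx
      have hxo : x ≠ c.o := by
        intro h; rw [h, c.lo] at hx; omega
      refine ⟨c.par x, ih.mpr ?_, c.mem_C_par hxo⟩
      have := (c.par_spec hxo).2
      omega

lemma card_sphere (k : ℕ) : (c.sphere k).card = c.d ^ k := by
  induction k with
  | zero => simp [sphere]
  | succ k ih =>
    rw [sphere, Finset.card_biUnion (fun u _ v _ huv => c.C_disjoint huv)]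
    rw [Finset.sum_congr rfl (fun u _ => c.card_C u), Finset.sum_const, ih]
    ring

lemma sphere_disjoint {j k : ℕ} (h : j ≠ k) : Disjoint (c.sphere j) (c.sphere k) := by
  rw [Finset.disjoint_left]
  intro x hj hk
  rw [c.mem_sphere] at hj hk
  omega

lemma sum_inv_pow_children (x : X) :
    ∑ v ∈ c.C x, ((c.d : ℝ) ^ c.ℓ v)⁻¹ = ((c.d : ℝ) ^ c.ℓ x)⁻¹ := by
  have hd0 : (0:ℝ) < (c.d : ℝ) := by
    have := c.hd; positivity
  have : ∀ v ∈ c.C x, ((c.d : ℝ) ^ c.ℓ v)⁻¹ = ((c.d : ℝ) ^ (c.ℓ x + 1))⁻¹ := fun v hv => by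
    rw [(c.mem_C.mp hv).2]
  rw [Finset.sum_congr rfl this, Finset.sum_const, c.card_C]
  field_simp
  ring_nf
  rw [inv_pow, mul_right_comm (c.d:ℝ), mul_inv_cancel₀ hd0.ne', one_mul,
    mul_inv_cancel₀ (pow_ne_zero _ hd0.ne')]

end Ctx

/-! ### The basic quantity `q = d^(-1/(p-1))` -/

def qval (p : ℝ) (d : ℕ) : ℝ := ((d:ℝ)⁻¹) ^ ((1:ℝ)/(p-1))

section Q

variable {p : ℝ} {d : ℕ}

lemma d_pos (hd : 2 ≤ d) : (0:ℝ) < (d:ℝ) := by positivity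
lemma d_one_lt (hd : 2 ≤ d) : (1:ℝ) < (d:ℝ) := by exact_mod_cast Nat.lt_of_lt_of_le one_lt_two hd

lemma qval_pos (hp : 1 < p) (hd : 2 ≤ d) : 0 < qval p d :=
  Real.rpow_pos_of_pos (inv_pos.mpr (d_pos hd)) _

lemma qval_lt_one (hp : 1 < p) (hd : 2 ≤ d) : qval p d < 1 :=
  Real.rpow_lt_one (inv_nonneg.mpr (d_pos hd).le)
    (inv_lt_one_of_one_lt₀ (d_one_lt hd)) (div_pos one_pos (by linarith))

lemma qpow_eq_rpow (hp : 1 < p) (hd : 2 ≤ d) (k : ℕ) :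
    (qval p d) ^ k = ((d:ℝ)⁻¹) ^ ((k:ℝ)/(p-1)) := by
  rw [← Real.rpow_natCast (qval p d) k, qval,
    ← Real.rpow_mul (inv_nonneg.mpr (d_pos hd).le)]
  congr 1; ring

lemma qpow_rpow (hp : 1 < p) (hd : 2 ≤ d) (k : ℕ) :
    ((qval p d) ^ k) ^ (p-1) = ((d:ℝ)⁻¹) ^ k := by
  have hp1 : p - 1 ≠ 0 := by intro h; nlinarith
  rw [qpow_eq_rpow hp hd, ← Real.rpow_mul (inv_nonneg.mpr (d_pos hd).le),
    div_mul_cancel₀ _ hp1, Real.rpow_natCast]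

lemma spow_qpow (hp : 1 < p) (hd : 2 ≤ d) (k : ℕ) :
    spow (p-1) ((qval p d) ^ k) = ((d:ℝ)⁻¹) ^ k := by
  rw [RTG.spow_of_pos (pow_pos (qval_pos hp hd) k), qpow_rpow hp hd]

lemma rpow_bridge (hp : 1 < p) (hd : 2 ≤ d) (n : ℕ) :
    (d:ℝ) ^ (-((n:ℝ)+1)/(p-1)) = (qval p d) ^ (n+1) := by
  rw [qpow_eq_rpow hp hd, ← Real.rpow_neg_one (d:ℝ),
    ← Real.rpow_mul (d_pos hd).le]
  congr 1; push_cast; ring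

lemma q_bridge (hp : 1 < p) (hd : 2 ≤ d) :
    (d:ℝ) ^ (-(1:ℝ)/(p-1)) = qval p d := by
  rw [qval, ← Real.rpow_neg_one (d:ℝ), ← Real.rpow_mul (d_pos hd).le]
  congr 1; ring

lemma mul_dinv_rpow (hp : 1 < p) (hd : 2 ≤ d) {m : ℝ} (hm : 0 ≤ m) :
    (m * (d:ℝ)⁻¹) ^ ((1:ℝ)/(p-1)) = m ^ ((1:ℝ)/(p-1)) * qval p d := by
  rw [Real.mul_rpow hm (inv_nonneg.mpr (d_pos hd).le), qval]

lemma theta_rpow_le (hp : 1 < p) (hd : 2 ≤ d) {θ : ℝ} (hθ : qval p d ≤ θ) :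
    θ ^ ((1:ℝ)-p) ≤ (d:ℝ) := by
  have h1 : θ ^ ((1:ℝ)-p) ≤ (qval p d) ^ ((1:ℝ)-p) :=
    Real.rpow_le_rpow_of_nonpos (qval_pos hp hd) hθ (by linarith)
  refine h1.trans_eq ?_
  rw [qval, ← Real.rpow_mul (inv_nonneg.mpr (d_pos hd).le)]
  have hp1 : p - 1 ≠ 0 := by intro h; nlinarith
  have : (1:ℝ)/(p-1) * (1-p) = -1 := by field_simp; ring
  rw [this, Real.rpow_neg_one, inv_inv]

end Q

lemma rpow_pinv {p t : ℝ} (hp : 1 < p) (ht : 0 < t) :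
    (t ^ (p-1)) ^ ((1:ℝ)/(p-1)) = t := by
  rw [← Real.rpow_mul ht.le, mul_one_div, div_self (by intro h; nlinarith : p - 1 ≠ 0),
    Real.rpow_one]

namespace Ctx

variable (c : Ctx X)

/-- The candidate Green function, in terms of `q`. -/
def Gq (p : ℝ) : X → ℝ := fun x => (qval p c.d) ^ (c.ℓ x + 1) / (1 - qval p c.d)

lemma one_sub_q_pos {p : ℝ} (hp : 1 < p) : 0 < 1 - qval p c.d :=
  sub_pos.mpr (qval_lt_one hp c.hd)

lemma Gq_pos {p : ℝ} (hp : 1 < p) (x : X) : 0 < c.Gq p x :=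
  div_pos (pow_pos (qval_pos hp c.hd) _) (c.one_sub_q_pos hp)

lemma Gq_sub_child {p : ℝ} (hp : 1 < p) {x v : X} (hv : v ∈ c.C x) :
    c.Gq p x - c.Gq p v = (qval p c.d) ^ (c.ℓ x + 1) := by
  have h1q := c.one_sub_q_pos hp
  rw [Gq, Gq, (c.mem_C.mp hv).2]
  field_simp
  ring

lemma Gq_sub_par {p : ℝ} (hp : 1 < p) {x : X} (hx : x ≠ c.o) :
    c.Gq p x - c.Gq p (c.par x) = -((qval p c.d) ^ (c.ℓ x)) := by
  have h1q := c.one_sub_q_pos hp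
  have hl : c.ℓ (c.par x) + 1 = c.ℓ x := (c.par_spec hx).2
  rw [Gq, Gq, ← hl]
  field_simp
  ring

/-- The p-Laplacian of `Gq` equals the indicator at `o`. -/
lemma lap_Gq {p : ℝ} (hp : 1 < p) (x : X) :
    ∑' y, c.b x y * spow (p-1) (c.Gq p x - c.Gq p y)
      = if x = c.o then 1 else 0 := by
  have hd0 : (0:ℝ) < (c.d : ℝ) := d_pos c.hd
  rw [c.tsum_nbr x (fun y => spow (p-1) (c.Gq p x - c.Gq p y))]
  have hch : ∀ v ∈ c.C x, spow (p-1) (c.Gq p x - c.Gq p v)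
      = ((c.d:ℝ)⁻¹) ^ (c.ℓ x + 1) := fun v hv => by
    rw [c.Gq_sub_child hp hv, spow_qpow hp c.hd]
  rw [Finset.sum_congr rfl hch, Finset.sum_const, c.card_C]
  by_cases hx : x = c.o
  · rw [if_pos hx, if_pos hx, add_zero, nsmul_eq_mul, hx, c.lo]
    field_simp
    simp [hd0.ne']
  · rw [if_neg hx, if_neg hx, c.Gq_sub_par hp hx, spow_neg, spow_qpow hp c.hd,
      nsmul_eq_mul]
    have hl : c.ℓ x ≠ 0 := fun h => hx (c.eq_o_of_level h)
    obtain ⟨n, hn⟩ := Nat.exists_eq_succ_of_ne_zero hl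
    rw [hn]
    field_simp
    ring_nf
    rw [mul_inv_cancel₀ hd0.ne', one_mul, sub_self]

/-- The inner harmonic sum over children. -/
def hS (p : ℝ) (φ : X → ℝ) (x : X) : ℝ := ∑ v ∈ c.C x, spow (p-1) (φ x - φ v)

/-- Lemma A, finite-depth version. -/
lemma lemA {p : ℝ} (hp : 1 < p) (φ : X → ℝ) (hpos : ∀ x, 0 < φ x)
    (hharm : ∀ x, x ≠ c.o → c.hS p φ x = spow (p-1) (φ (c.par x) - φ x)) :
    ∀ K : ℕ, ∀ x, ∀ m : ℝ, 0 ≤ m → m ≤ c.hS p φ x →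
      m ^ ((1:ℝ)/(p-1)) * (qval p c.d * (1 - (qval p c.d)^K)/(1 - qval p c.d)) ≤ φ x := by
  set q := qval p c.d with hqdef
  have hq0 : 0 < q := qval_pos hp c.hd
  have h1q : 0 < 1 - q := c.one_sub_q_pos hp
  have hd0 : (0:ℝ) < (c.d : ℝ) := d_pos c.hd
  have he : (0:ℝ) < 1/(p-1) := div_pos one_pos (by linarith)
  intro K
  induction K with
  | zero =>
    intro x m hm _
    simp only [pow_zero, sub_self, mul_zero, zero_div]
    exact (hpos x).le
  | succ K ih =>
    intro x m hm hle
    rcases eq_or_lt_of_le hm with hm0 | hm0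
    · rw [← hm0, Real.zero_rpow (ne_of_gt he), zero_mul]
      exact (hpos x).le
    · -- find a child carrying at least m/d of the flow
      have hne : (c.C x).Nonempty := by
        rw [← Finset.card_pos, c.card_C]
        exact Nat.lt_of_lt_of_le Nat.zero_lt_two c.hd
      have hsum : ∑ v ∈ c.C x, m * ((c.d:ℝ))⁻¹ ≤ ∑ v ∈ c.C x, spow (p-1) (φ x - φ v) := by
        rw [Finset.sum_const, c.card_C, nsmul_eq_mul]
        calc (c.d:ℝ) * (m * ((c.d:ℝ))⁻¹) = m := by field_simp
          _ ≤ c.hS p φ x := hle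
      obtain ⟨v, hv, hvle⟩ := Finset.exists_le_of_sum_le hne hsum
      have hmd : 0 < m * ((c.d:ℝ))⁻¹ := mul_pos hm0 (inv_pos.mpr hd0)
      obtain ⟨ht, hts⟩ := RTG.le_of_spow_le hp hmd hvle
      -- harmonicity at v
      have hvo : v ≠ c.o := c.ne_o_of_mem_C hv
      have hSv : m * ((c.d:ℝ))⁻¹ ≤ c.hS p φ v := by
        rw [hharm v hvo, c.par_of_mem_C hv]
        exact hvle
      have hIH := ih v (m * ((c.d:ℝ))⁻¹) hmd.le hSv
      rw [mul_dinv_rpow hp c.hd hm] at hts hIH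
      have hqK : q^K ≤ 1 := pow_le_one₀ hq0.le (qval_lt_one hp c.hd).le
      have hstuff : 0 ≤ q * (1 - q^K)/(1-q) :=
        div_nonneg (mul_nonneg hq0.le (by linarith)) h1q.le
      have key : m ^ ((1:ℝ)/(p-1)) * (q * (1 - q^(K+1))/(1-q))
          = m ^ ((1:ℝ)/(p-1)) * q + m ^ ((1:ℝ)/(p-1)) * q * (q * (1 - q^K)/(1-q)) := by
        field_simp
        ring
      rw [key]
      have h1 : m ^ ((1:ℝ)/(p-1)) * q ≤ φ x - φ v := hts
      linarith
 
/-- Lemma A, limit version. -/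
lemma lemA' {p : ℝ} (hp : 1 < p) (φ : X → ℝ) (hpos : ∀ x, 0 < φ x)
    (hharm : ∀ x, x ≠ c.o → c.hS p φ x = spow (p-1) (φ (c.par x) - φ x))
    (x : X) (m : ℝ) (hm : 0 ≤ m) (hle : m ≤ c.hS p φ x) :
    m ^ ((1:ℝ)/(p-1)) * (qval p c.d/(1 - qval p c.d)) ≤ φ x := by
  set q := qval p c.d with hqdef
  have hq0 : 0 < q := qval_pos hp c.hd
  have hq1 : q < 1 := qval_lt_one hp c.hd
  have h1q : 0 < 1 - q := c.one_sub_q_pos hp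
  set A := m ^ ((1:ℝ)/(p-1)) * (q/(1-q)) with hA
  have hten : Tendsto (fun K : ℕ => A * (1 - q^K)) atTop (nhds (A * (1 - 0))) :=
    (tendsto_const_nhds.sub
      (tendsto_pow_atTop_nhds_zero_of_lt_one hq0.le hq1)).const_mul A
  rw [sub_zero, mul_one] at hten
  refine le_of_tendsto' hten (fun K => ?_)
  have := c.lemA hp φ hpos hharm K x m hm hle
  calc A * (1 - q^K) = m ^ ((1:ℝ)/(p-1)) * (q * (1 - q^K)/(1-q)) := by
        rw [hA]; field_simp
    _ ≤ φ x := this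

/-- Lemma B: the pointwise lower bound `Gq ≤ φ`. -/
lemma lemB {p : ℝ} (hp : 1 < p) (φ : X → ℝ) (hpos : ∀ x, 0 < φ x)
    (hharm : ∀ x, x ≠ c.o → c.hS p φ x = spow (p-1) (φ (c.par x) - φ x))
    (ho : (1:ℝ) ≤ c.hS p φ c.o) :
    ∀ n : ℕ, ∀ x, c.ℓ x = n → (qval p c.d)^(n+1)/(1 - qval p c.d) ≤ φ x := by
  set q := qval p c.d with hqdef
  have hq0 : 0 < q := qval_pos hp c.hd
  have hq1 : q < 1 := qval_lt_one hp c.hd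
  have h1q : 0 < 1 - q := c.one_sub_q_pos hp
  intro n
  induction n with
  | zero =>
    intro x hx
    have hxo : x = c.o := c.eq_o_of_level hx
    rw [hxo]
    have := c.lemA' hp φ hpos hharm c.o 1 zero_le_one ho
    rw [Real.one_rpow, one_mul] at this
    calc q^(0+1)/(1-q) = q/(1-q) := by rw [pow_one]
      _ ≤ φ c.o := this
  | succ n ih =>
    intro x hx
    have hxo : x ≠ c.o := by
      intro h; rw [h, c.lo] at hx; omega
    have hu : c.ℓ (c.par x) = n := by
      have := (c.par_spec hxo).2; omega
    have hIH : q^(n+1)/(1-q) ≤ φ (c.par x) := ih (c.par x) hu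
    by_cases hcase : φ (c.par x) - φ x ≤ q^(n+1)
    · have hexp : q^(n+1+1)/(1-q) = q^(n+1)/(1-q) - q^(n+1) := by
        field_simp
        ring
      rw [hexp]
      linarith
    · push_neg at hcase
      have ht0 : 0 < φ (c.par x) - φ x := lt_trans (pow_pos hq0 _) hcase
      set t := φ (c.par x) - φ x with htdef
      have hm : (0:ℝ) ≤ t ^ (p-1) := Real.rpow_nonneg ht0.le _
      have hSx : t ^ (p-1) ≤ c.hS p φ x := by
        rw [hharm x hxo, ← htdef, RTG.spow_of_pos ht0]
      have := c.lemA' hp φ hpos hharm x (t ^ (p-1)) hm hSx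
      rw [rpow_pinv hp ht0] at this
      calc q^(n+1+1)/(1-q) = q^(n+1) * (q/(1-q)) := by
            field_simp; ring
        _ ≤ t * (q/(1-q)) := by
            exact mul_le_mul_of_nonneg_right hcase.le (div_nonneg hq0.le h1q.le)
        _ ≤ φ x := this

end Ctx

/-- Finite Jensen/power-mean inequality. -/
lemma jensen {p : ℝ} (hp : 1 < p) {ι : Type*} (F : Finset ι) (μ a : ι → ℝ)
    (hμ : ∀ i ∈ F, 0 ≤ μ i) (ha : ∀ i ∈ F, 0 ≤ a i) {M : ℝ} (hM : 0 < M)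
    (hs : ∑ i ∈ F, μ i ≤ M) :
    (∑ i ∈ F, μ i * a i) ^ p ≤ M ^ (p-1) * ∑ i ∈ F, μ i * a i ^ p := by
  have hp0 : (0:ℝ) < p := by linarith
  set s := ∑ i ∈ F, μ i with hsdef
  have hs0 : 0 ≤ s := Finset.sum_nonneg hμ
  have hY : 0 ≤ ∑ i ∈ F, μ i * a i ^ p :=
    Finset.sum_nonneg fun i hi => mul_nonneg (hμ i hi) (Real.rpow_nonneg (ha i hi) p)
  rcases eq_or_lt_of_le hs0 with hs0' | hs0'
  · have hz : ∀ i ∈ F, μ i = 0 :=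
      (Finset.sum_eq_zero_iff_of_nonneg hμ).mp hs0'.symm
    have h1 : ∑ i ∈ F, μ i * a i = 0 :=
      Finset.sum_eq_zero fun i hi => by rw [hz i hi, zero_mul]
    rw [h1, Real.zero_rpow (ne_of_gt hp0)]
    positivity
  · have h := Real.rpow_arith_mean_le_arith_mean_rpow F (fun i => μ i / s) a
      (fun i hi => div_nonneg (hμ i hi) hs0) (by rw [← Finset.sum_div, ← hsdef, div_self (ne_of_gt hs0')])
      ha hp.le
    have hL : ∑ i ∈ F, μ i / s * a i = (∑ i ∈ F, μ i * a i) / s := by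
      rw [Finset.sum_div]; exact Finset.sum_congr rfl fun i _ => by ring
    have hR : ∑ i ∈ F, μ i / s * a i ^ p = (∑ i ∈ F, μ i * a i ^ p) / s := by
      rw [Finset.sum_div]; exact Finset.sum_congr rfl fun i _ => by ring
    rw [hL, hR] at h
    have hXnn : 0 ≤ ∑ i ∈ F, μ i * a i :=
      Finset.sum_nonneg fun i hi => mul_nonneg (hμ i hi) (ha i hi)
    rw [Real.div_rpow hXnn hs0] at h
    have hsp : 0 < s ^ p := Real.rpow_pos_of_pos hs0' p
    rw [div_le_div_iff₀ hsp hs0'] at h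
    -- h : (∑ μ a)^p * s ≤ (∑ μ a^p) * s^p
    have hspow : s ^ p = s ^ (p-1) * s := by
      have h' : s ^ (p-1) * s ^ (1:ℝ) = s ^ p := by
        rw [← Real.rpow_add hs0']; ring_nf
      rw [Real.rpow_one] at h'
      exact h'.symm
    have hs1 : s ^ (p-1) ≤ M ^ (p-1) :=
      Real.rpow_le_rpow hs0 hs (by linarith)
    calc (∑ i ∈ F, μ i * a i) ^ p
        ≤ (∑ i ∈ F, μ i * a i ^ p) * s ^ (p-1) := by
          rw [hspow] at h
          have := mul_le_mul_of_nonneg_right h (le_of_lt (inv_pos.mpr hs0'))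
          calc (∑ i ∈ F, μ i * a i) ^ p
              = (∑ i ∈ F, μ i * a i) ^ p * s * s⁻¹ := by
                field_simp
            _ ≤ (∑ i ∈ F, μ i * a i ^ p) * (s ^ (p-1) * s) * s⁻¹ := this
            _ = (∑ i ∈ F, μ i * a i ^ p) * s ^ (p-1) := by
                field_simp
      _ ≤ M ^ (p-1) * ∑ i ∈ F, μ i * a i ^ p := by
          calc (∑ i ∈ F, μ i * a i ^ p) * s ^ (p-1)
              ≤ (∑ i ∈ F, μ i * a i ^ p) * M ^ (p-1) :=
                mul_le_mul_of_nonneg_left hs1 hY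
            _ = M ^ (p-1) * ∑ i ∈ F, μ i * a i ^ p := mul_comm _ _

/-- Partial geometric sums starting at 1 are bounded by `θ/(1-θ)`. -/
lemma geo {θ : ℝ} (h0 : 0 ≤ θ) (h1 : θ < 1) (K : ℕ) :
    ∑ k ∈ Finset.Icc 1 K, θ^k ≤ θ/(1-θ) := by
  have h1θ : 0 < 1 - θ := by linarith
  have hid : ∀ K : ℕ, (∑ k ∈ Finset.Icc 1 K, θ^k) * (1-θ) = θ - θ^(K+1) := by
    intro K
    induction K with
    | zero => simp
    | succ K ih =>
      rw [Finset.sum_Icc_succ_top (by omega), add_mul, ih]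
      ring
  rw [le_div_iff₀ h1θ]
  have := hid K
  have hnn : 0 ≤ θ^(K+1) := pow_nonneg h0 _
  linarith

namespace Ctx

variable (c : Ctx X)

lemma boundary (k : ℕ) :
    (∑' z : X × X, if c.ℓ z.1 = k ∧ c.ℓ z.2 = k + 1 then c.b z.1 z.2 else 0)
      = (c.d : ℝ) ^ (k + 1) := by
  have hvanish : ∀ z ∉ (c.sphere k) ×ˢ (c.sphere (k+1)),
      (if c.ℓ z.1 = k ∧ c.ℓ z.2 = k + 1 then c.b z.1 z.2 else 0) = 0 := by
    intro z hz
    rw [if_neg]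
    rintro ⟨h1, h2⟩
    exact hz (Finset.mem_product.mpr ⟨c.mem_sphere.mpr h1, c.mem_sphere.mpr h2⟩)
  rw [tsum_eq_sum hvanish, Finset.sum_product]
  have hrow : ∀ x ∈ c.sphere k,
      (∑ y ∈ c.sphere (k+1), if c.ℓ x = k ∧ c.ℓ y = k + 1 then c.b x y else 0)
        = (c.d : ℝ) := by
    intro x hx
    have hx' : c.ℓ x = k := c.mem_sphere.mp hx
    have h1 : ∀ y ∈ c.sphere (k+1),
        (if c.ℓ x = k ∧ c.ℓ y = k + 1 then c.b x y else 0) = c.b x y :=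
      fun y hy => if_pos ⟨hx', c.mem_sphere.mp hy⟩
    rw [Finset.sum_congr rfl h1]
    have hsub : c.C x ⊆ c.sphere (k+1) := fun v hv => by
      rw [c.mem_sphere, (c.mem_C.mp hv).2, hx']
    rw [← Finset.sum_subset hsub (fun y hy hyC => ?_)]
    · have h2 : ∀ v ∈ c.C x, c.b x v = 1 := fun v hv => (c.mem_C.mp hv).1
      rw [Finset.sum_congr rfl h2, Finset.sum_const, c.card_C, nsmul_eq_mul, mul_one]
    · rcases c.b01 x y with h0 | h1'
      · exact h0
      · exfalso
        rcases c.level_step h1' with hl | hl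
        · exact hyC (c.mem_C.mpr ⟨h1', hl⟩)
        · have := c.mem_sphere.mp hy
          omega
  rw [Finset.sum_congr rfl hrow, Finset.sum_const, c.card_sphere, nsmul_eq_mul]
  push_cast
  ring

end Ctx

namespace Ctx

variable (c : Ctx X)

lemma subcrit {p : ℝ} (hp : 1 < p) :
    pSubcritical p c.b (fun _ => 1) (fun _ => 0) := by
  classical
  have hp0 : (0:ℝ) < p := by linarith
  set q := qval p c.d with hqdef
  have hq0 : 0 < q := qval_pos hp c.hd
  have hq1 : q < 1 := qval_lt_one hp c.hd
  have hd0 : (0:ℝ) < (c.d : ℝ) := d_pos c.hd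
  set θ : ℝ := (1 + q)/2 with hθdef
  have hθ0 : 0 < θ := by rw [hθdef]; linarith
  have hθ1 : θ < 1 := by rw [hθdef]; linarith
  have hqθ : q ≤ θ := by rw [hθdef]; linarith
  set M : ℝ := θ/(1-θ) with hMdef
  have hM : 0 < M := div_pos hθ0 (by linarith)
  set ε : ℝ := (M ^ (p-1))⁻¹ with hεdef
  have hMp : 0 < M ^ (p-1) := Real.rpow_pos_of_pos hM _
  have hε : 0 < ε := inv_pos.mpr hMp
  refine ⟨fun x => if x = c.o then ε else 0, fun x => ?_, ?_, fun φ hsupp => ?_⟩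
  · by_cases h : x = c.o <;> simp [h, hε.le]
  · intro h
    have := congrFun h c.o
    simp only [if_pos rfl] at this
    exact absurd this (ne_of_gt hε)
  · -- main estimate
    set S : Finset X := hsupp.toFinset ∪ {c.o} with hSdef
    have hoS : c.o ∈ S := Finset.mem_union_right _ (Finset.mem_singleton_self _)
    have hφS : ∀ v, v ∉ S → φ v = 0 := fun v hv => by
      by_contra h
      exact hv (Finset.mem_union_left _ (hsupp.mem_toFinset.mpr h))
    set B : Finset X := S.biUnion c.C with hBdef
    set T : Finset X := S ∪ B with hTdef
    set P : X → ℝ := fun v => ((c.d:ℝ) ^ (c.ℓ v))⁻¹ with hPdef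
    have hPnn : ∀ v, 0 ≤ P v := fun v => by positivity
    set g : X → ℝ := fun v => if v = c.o then 0 else P v * (φ (c.par v) - φ v) with hgdef
    -- Claim 1 : telescoping identity
    have hT1 : ∑ v ∈ T, g v = φ c.o := by
      have hgsplit : ∀ v ∈ T, g v = (if v = c.o then 0 else P v * φ (c.par v))
          - (if v = c.o then 0 else P v * φ v) := by
        intro v _
        by_cases h : v = c.o
        · simp [hgdef, h]
        · simp only [hgdef, if_neg h]
          ring
      rw [Finset.sum_congr rfl hgsplit, Finset.sum_sub_distrib]
      have hA : ∑ v ∈ T, (if v = c.o then 0 else P v * φ (c.par v))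
          = ∑ u ∈ S, P u * φ u := by
        have hBT : B ⊆ T := Finset.subset_union_right
        rw [← Finset.sum_subset hBT ?_]
        · rw [Finset.sum_biUnion (fun u _ v _ huv => c.C_disjoint huv)]
          refine Finset.sum_congr rfl (fun u hu => ?_)
          have hinner : ∀ v ∈ c.C u, (if v = c.o then 0 else P v * φ (c.par v))
              = P v * φ u := fun v hv => by
            rw [if_neg (c.ne_o_of_mem_C hv), c.par_of_mem_C hv]
          rw [Finset.sum_congr rfl hinner, ← Finset.sum_mul, c.sum_inv_pow_children u]
        · intro v hvT hvB
          by_cases hvo : v = c.o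
          · rw [if_pos hvo]
          · rw [if_neg hvo]
            by_cases hφp : φ (c.par v) = 0
            · rw [hφp, mul_zero]
            · exfalso
              have hpS : c.par v ∈ S := by
                by_contra h; exact hφp (hφS _ h)
              exact hvB (Finset.mem_biUnion.mpr ⟨c.par v, hpS, c.mem_C_par hvo⟩)
      have hA2 : ∑ v ∈ T, (if v = c.o then 0 else P v * φ v)
          = (∑ u ∈ S, P u * φ u) - φ c.o := by
        have hST : S ⊆ T := Finset.subset_union_left
        rw [← Finset.sum_subset hST ?_]
        · have h1 : ∀ v ∈ S, (if v = c.o then 0 else P v * φ v)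
              = P v * φ v - (if v = c.o then P v * φ v else 0) := by
            intro v _
            by_cases h : v = c.o <;> simp [h]
          rw [Finset.sum_congr rfl h1, Finset.sum_sub_distrib]
          congr 1
          rw [Finset.sum_ite_eq' S c.o (fun v => P v * φ v), if_pos hoS, hPdef]
          simp [c.lo]
        · intro v hvT hvS
          rw [hφS v hvS, mul_zero, if_neg]
          · intro h; rw [h] at hvS; exact hvS hoS
      rw [hA, hA2]
      ring
    -- the collection of "edges" we use
    set F : Finset X := T.erase c.o with hFdef
    set δ : X → ℝ := fun v => φ (c.par v) - φ v with hδdef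
    set D : ℝ := ∑ v ∈ F, |δ v| ^ p with hDdef
    have hDnn : 0 ≤ D :=
      Finset.sum_nonneg fun v _ => Real.rpow_nonneg (abs_nonneg _) _
    have hFno : ∀ v ∈ F, v ≠ c.o := fun v hv => (Finset.mem_erase.mp hv).1
    -- Claim 2 : |φ o| ^ p ≤ M^(p-1) * D
    have hclaim2 : |φ c.o| ^ p ≤ M ^ (p-1) * D := by
      set μ : X → ℝ := fun v => (θ/(c.d:ℝ))^(c.ℓ v) with hμdef
      set a : X → ℝ := fun v => |δ v| * θ ^ (-(c.ℓ v : ℝ)) with hadef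
      have hμnn : ∀ v, 0 ≤ μ v := fun v => pow_nonneg (div_nonneg hθ0.le hd0.le) _
      have hann : ∀ v, 0 ≤ a v := fun v =>
        mul_nonneg (abs_nonneg _) (Real.rpow_nonneg hθ0.le _)
      have hμa : ∀ v, μ v * a v = P v * |δ v| := by
        intro v
        rw [hμdef, hadef, hPdef]
        simp only
        rw [div_pow, ← Real.rpow_natCast θ (c.ℓ v)]
        have hθx : θ ^ ((c.ℓ v : ℝ)) * θ ^ (-(c.ℓ v : ℝ)) = 1 := by
          rw [← Real.rpow_add hθ0, add_neg_cancel, Real.rpow_zero]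
        have e : θ ^ ((c.ℓ v : ℝ)) / (c.d:ℝ)^(c.ℓ v) * (|δ v| * θ ^ (-(c.ℓ v:ℝ)))
            = (θ ^ ((c.ℓ v : ℝ)) * θ ^ (-(c.ℓ v:ℝ))) * |δ v| / (c.d:ℝ)^(c.ℓ v) := by
          ring
        rw [e, hθx, one_mul, div_eq_mul_inv, mul_comm]
      have habs : |φ c.o| ≤ ∑ v ∈ F, μ v * a v := by
        have h1 : |φ c.o| ≤ ∑ v ∈ T, |g v| := by
          rw [← hT1]; exact Finset.abs_sum_le_sum_abs _ _
        have h2 : ∑ v ∈ T, |g v| = ∑ v ∈ F, |g v| := by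
          refine (Finset.sum_subset (Finset.erase_subset _ _) ?_).symm
          intro v hvT hvF
          have : v = c.o := by
            by_contra h
            exact hvF (Finset.mem_erase.mpr ⟨h, hvT⟩)
          rw [hgdef]; simp [this]
        have h3 : ∀ v ∈ F, |g v| = μ v * a v := by
          intro v hv
          rw [hμa v, hgdef]
          simp only [if_neg (hFno v hv)]
          rw [abs_mul, abs_of_nonneg (hPnn v)]
        rw [h2, Finset.sum_congr rfl h3] at h1
        exact h1
      have hsumμ : ∑ v ∈ F, μ v ≤ M := by
        set K := F.sup c.ℓ with hKdef
        have hFsub : F ⊆ (Finset.Icc 1 K).biUnion c.sphere := by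
          intro v hv
          rw [Finset.mem_biUnion]
          refine ⟨c.ℓ v, Finset.mem_Icc.mpr ⟨?_, Finset.le_sup hv⟩, c.mem_sphere.mpr rfl⟩
          by_contra h
          push_neg at h
          exact hFno v hv (c.eq_o_of_level (by omega))
        calc ∑ v ∈ F, μ v
            ≤ ∑ v ∈ (Finset.Icc 1 K).biUnion c.sphere, μ v :=
              Finset.sum_le_sum_of_subset_of_nonneg hFsub (fun v _ _ => hμnn v)
          _ = ∑ k ∈ Finset.Icc 1 K, ∑ v ∈ c.sphere k, μ v :=
              Finset.sum_biUnion (fun j _ k _ hjk => c.sphere_disjoint hjk)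
          _ = ∑ k ∈ Finset.Icc 1 K, θ^k := by
              refine Finset.sum_congr rfl (fun k _ => ?_)
              have : ∀ v ∈ c.sphere k, μ v = (θ/(c.d:ℝ))^k := fun v hv => by
                rw [hμdef]; simp only; rw [c.mem_sphere.mp hv]
              rw [Finset.sum_congr rfl this, Finset.sum_const, c.card_sphere, nsmul_eq_mul,
                div_pow]
              push_cast
              field_simp
          _ ≤ M := geo hθ0.le hθ1 K
      have hjen := RTG.jensen hp F μ a (fun v _ => hμnn v) (fun v _ => hann v) hM hsumμ
      have hstep1 : |φ c.o| ^ p ≤ (∑ v ∈ F, μ v * a v) ^ p :=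
        Real.rpow_le_rpow (abs_nonneg _) habs hp0.le
      have hstep3 : ∑ v ∈ F, μ v * a v ^ p ≤ D := by
        rw [hDdef]
        refine Finset.sum_le_sum (fun v hv => ?_)
        have hap : a v ^ p = |δ v| ^ p * θ ^ (-(c.ℓ v : ℝ) * p) := by
          rw [hadef]
          simp only
          rw [Real.mul_rpow (abs_nonneg _) (Real.rpow_nonneg hθ0.le _),
            Real.rpow_mul hθ0.le]
        have hco : (θ/(c.d:ℝ))^(c.ℓ v) * θ ^ (-(c.ℓ v:ℝ) * p) ≤ 1 := by
          have h1 : (θ/(c.d:ℝ))^(c.ℓ v) * θ ^ (-(c.ℓ v:ℝ) * p)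
              = (θ ^ ((1:ℝ)-p))^(c.ℓ v) * (((c.d:ℝ))^(c.ℓ v))⁻¹ := by
            rw [div_pow, ← Real.rpow_natCast θ (c.ℓ v),
              ← Real.rpow_natCast (θ ^ ((1:ℝ)-p)) (c.ℓ v), ← Real.rpow_mul hθ0.le]
            rw [show ((1:ℝ)-p) * (c.ℓ v : ℝ) = (c.ℓ v : ℝ) + (-(c.ℓ v:ℝ) * p) by ring,
              Real.rpow_add hθ0]
            ring
          rw [h1, ← div_eq_mul_inv, div_le_one (by positivity)]
          exact pow_le_pow_left₀ (Real.rpow_nonneg hθ0.le _)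
            (theta_rpow_le hp c.hd (hqdef ▸ hqθ)) _
        calc μ v * a v ^ p
            = ((θ/(c.d:ℝ))^(c.ℓ v) * θ ^ (-(c.ℓ v:ℝ) * p)) * |δ v| ^ p := by
              rw [hap, hμdef]; ring
          _ ≤ 1 * |δ v| ^ p :=
              mul_le_mul_of_nonneg_right hco (Real.rpow_nonneg (abs_nonneg _) _)
          _ = |δ v| ^ p := one_mul _
      calc |φ c.o| ^ p ≤ (∑ v ∈ F, μ v * a v) ^ p := hstep1
        _ ≤ M ^ (p-1) * ∑ v ∈ F, μ v * a v ^ p := hjen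
        _ ≤ M ^ (p-1) * D := mul_le_mul_of_nonneg_left hstep3 hMp.le
    -- Claim 3 : D ≤ (1/2) * (∑' pairs)
    set f : X × X → ℝ := fun z => c.b z.1 z.2 * |φ z.1 - φ z.2| ^ p with hfdef
    have hfnn : ∀ z : X × X, 0 ≤ f z := fun z =>
      mul_nonneg (c.b_nonneg _ _) (Real.rpow_nonneg (abs_nonneg _) _)
    set NS : Finset X := S.biUnion c.NFin with hNSdef
    set Etot : Finset (X × X) := (S ×ˢ NS) ∪ (NS ×ˢ S) with hEtotdef
    have hvan : ∀ z ∉ Etot, f z = 0 := by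
      intro z hz
      by_contra h
      have hb : c.b z.1 z.2 = 1 := by
        rcases c.b01 z.1 z.2 with h0 | h1
        · exact absurd (by rw [hfdef]; simp only; rw [h0, zero_mul]) h
        · exact h1
      have hφne : φ z.1 ≠ φ z.2 := by
        intro he
        exact h (by rw [hfdef]; simp only; rw [he, sub_self, abs_zero,
          Real.zero_rpow (ne_of_gt hp0), mul_zero])
      have hcases : φ z.1 ≠ 0 ∨ φ z.2 ≠ 0 := by
        by_contra hcc
        push_neg at hcc
        exact hφne (by rw [hcc.1, hcc.2])
      rcases hcases with h1 | h2
      · have hz1 : z.1 ∈ S := by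
          by_contra hc; exact h1 (hφS _ hc)
        have hz2 : z.2 ∈ NS :=
          Finset.mem_biUnion.mpr ⟨z.1, hz1, c.mem_NFin_of_b hb⟩
        exact hz (Finset.mem_union_left _ (Finset.mem_product.mpr ⟨hz1, hz2⟩))
      · have hz2 : z.2 ∈ S := by
          by_contra hc; exact h2 (hφS _ hc)
        have hb' : c.b z.2 z.1 = 1 := by rw [← c.symm]; exact hb
        have hz1 : z.1 ∈ NS :=
          Finset.mem_biUnion.mpr ⟨z.2, hz2, c.mem_NFin_of_b hb'⟩
        exact hz (Finset.mem_union_right _ (Finset.mem_product.mpr ⟨hz1, hz2⟩))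
    have hsummable : Summable f := summable_of_ne_finset_zero hvan
    set E1 : Finset (X × X) := F.image (fun v => (c.par v, v)) with hE1def
    set E2 : Finset (X × X) := F.image (fun v => (v, c.par v)) with hE2def
    have hlevE : ∀ v ∈ F, c.ℓ (c.par v) + 1 = c.ℓ v := fun v hv =>
      (c.par_spec (hFno v hv)).2
    have hE12 : Disjoint E1 E2 := by
      rw [Finset.disjoint_left]
      rintro z h1 h2
      obtain ⟨v, hv, hv2⟩ := Finset.mem_image.mp h1
      obtain ⟨w, hw, hw2⟩ := Finset.mem_image.mp h2
      rw [← hw2] at hv2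
      have e1 := congrArg Prod.fst hv2
      have e2 := congrArg Prod.snd hv2
      simp only at e1 e2
      have l1 := hlevE v hv
      have l2 := hlevE w hw
      rw [← e2] at l2
      rw [e1] at l1
      omega
    have hsumE : ∑ z ∈ E1 ∪ E2, f z = 2 * D := by
      rw [Finset.sum_union hE12]
      have hinj1 : ∀ x ∈ F, ∀ y ∈ F, (c.par x, x) = (c.par y, y) → x = y := by
        intro x _ y _ h; exact congrArg Prod.snd h
      have hinj2 : ∀ x ∈ F, ∀ y ∈ F, (x, c.par x) = (y, c.par y) → x = y := by
        intro x _ y _ h; exact congrArg Prod.fst h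
      rw [Finset.sum_image hinj1, Finset.sum_image hinj2]
      have hbpar : ∀ v ∈ F, c.b (c.par v) v = 1 := fun v hv => by
        rw [← c.symm]; exact (c.par_spec (hFno v hv)).1
      have t1 : ∀ v ∈ F, f (c.par v, v) = |δ v| ^ p := fun v hv => by
        rw [hfdef]; simp only; rw [hbpar v hv, one_mul, hδdef]
      have t2 : ∀ v ∈ F, f (v, c.par v) = |δ v| ^ p := fun v hv => by
        rw [hfdef]; simp only
        rw [c.symm, hbpar v hv, one_mul, hδdef, abs_sub_comm]
      rw [Finset.sum_congr rfl t1, Finset.sum_congr rfl t2, hDdef]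
      ring
    have hclaim3 : D ≤ (1/2) * ∑' z : X × X, f z := by
      have := Summable.sum_le_tsum (E1 ∪ E2) (fun z _ => hfnn z) hsummable
      rw [hsumE] at this
      linarith
    -- put everything together
    have htsum2 : (∑' x, (fun _ => (1:ℝ)) x * ((fun _ => (0:ℝ)) x
        - (if x = c.o then ε else 0)) * |φ x| ^ p)
        = -(ε * |φ c.o| ^ p) := by
      rw [tsum_eq_single c.o (fun x hx => by simp [if_neg hx])]
      simp
    rw [pEnergy]
    rw [htsum2]
    have hfin : ε * |φ c.o| ^ p ≤ (1/2) * ∑' z : X × X, f z := by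
      calc ε * |φ c.o| ^ p ≤ ε * (M ^ (p-1) * D) :=
            mul_le_mul_of_nonneg_left hclaim2 hε.le
        _ = D := by rw [hεdef]; field_simp
        _ ≤ (1/2) * ∑' z : X × X, f z := hclaim3
    have : (∑' z : X × X, c.b z.1 z.2 * |φ z.1 - φ z.2| ^ p) = ∑' z : X × X, f z := rfl
    rw [this]
    linarith

end Ctx

end RTG

open RTG in
/-- the Green function of the `d`-regular tree. -/
theorem regular_tree_green
    {X : Type} [Countable X] [Infinite X]
    (p : ℝ) (hp : 1 < p) (d : ℕ) (hd : 2 ≤ d)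
    (b : X → X → ℝ) (o : X) (ℓ : X → ℕ) (htree : IsRegularTree d b o ℓ) :
    (∀ k : ℕ,
      (∑' z : X × X, if ℓ z.1 = k ∧ ℓ z.2 = k + 1 then b z.1 z.2 else 0)
        = (d : ℝ) ^ (k + 1)) ∧
    pSubcritical p b (fun _ => 1) (fun _ => 0) ∧
    IsGreenFunction p b (fun _ => 1) 0 o
      (fun x => (d : ℝ) ^ (-((ℓ x : ℝ) + 1) / (p - 1))
        / (1 - (d : ℝ) ^ (-(1 : ℝ) / (p - 1)))) := by
  have hp0 : (0:ℝ) < p := by linarith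
  set c : Ctx X := ⟨d, b, o, ℓ, hd, htree⟩ with hcdef
  refine ⟨fun k => c.boundary k, c.subcrit hp, ?_⟩
  have hG : (fun x => (d : ℝ) ^ (-((ℓ x : ℝ) + 1) / (p - 1))
        / (1 - (d : ℝ) ^ (-(1 : ℝ) / (p - 1)))) = c.Gq p := by
    funext x
    show _ = (qval p c.d) ^ (c.ℓ x + 1) / (1 - qval p c.d)
    rw [rpow_bridge hp hd (ℓ x), q_bridge hp hd]
  rw [hG]
  refine ⟨c.Gq_pos hp, ?_, ?_, ?_⟩
  · intro x
    exact summable_of_ne_finset_zero (s := c.NFin x) fun y hy => by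
      rw [show b x y = 0 from c.b_eq_zero_of_not_mem hy, zero_mul]
  · intro x
    have h := c.lap_Gq hp x
    simp only [schrodOp, pLap, zero_mul, add_zero, one_div_one, one_mul]
    exact h
  · intro φ hφF hφpos hφeq x
    have heq : ∀ y, (∑ v ∈ c.C y, spow (p-1) (φ y - φ v))
        + (if y = c.o then 0 else spow (p-1) (φ y - φ (c.par y)))
        = if y = c.o then 1 else 0 := by
      intro y
      have h := hφeq y
      simp only [schrodOp, pLap, zero_mul, add_zero, one_div_one, one_mul] at h
      rw [← c.tsum_nbr y (fun z => spow (p-1) (φ y - φ z))]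
      exact h
    have hharm : ∀ y, y ≠ c.o → c.hS p φ y = spow (p-1) (φ (c.par y) - φ y) := by
      intro y hy
      have h := heq y
      rw [if_neg hy, if_neg hy] at h
      have h2 : spow (p-1) (φ (c.par y) - φ y) = - spow (p-1) (φ y - φ (c.par y)) := by
        rw [← RTG.spow_neg, neg_sub]
      rw [Ctx.hS, h2]
      linarith
    have ho : (1:ℝ) ≤ c.hS p φ c.o := by
      have h := heq c.o
      rw [if_pos rfl, if_pos rfl, add_zero] at h
      exact le_of_eq h.symm
    exact c.lemB hp φ hφpos hharm ho (c.ℓ x) x rfl
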